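/- Let $n \geq 1$, $\mathcal{OC}: \{1,\dots,n\}\to\mathbb{R}$, $\mathcal{IC}_i:\{i,\dots,n\}\to\mathbb{R}$, and $d_j \in \mathbb{R}$ with $\mathcal{OC}(1) = d_1$ (after normalization). Suppose there exist payments $f(i,j)$ for $1 \leq i \leq j \leq n$ satisfying budget balance $\sum_{i=1}^{j} f(i,j) = \mathcal{OC}(j)$, the solo condition $f(j,j)$ when $j$ is alone equals $d_j$, the monotonicity $f(i,j) + \mathcal{IC}_i(j) \leq f(i,j-1) + \mathcal{IC}_i(j-1)$ for $i < j$, and $f(j,j) + \mathcal{IC}_j(j) \leq d_j$ for the joining passenger $j$. Then for every $2 \leq j \leq n$: $\big(\mathcal{OC}(j)-\mathcal{OC}(j-1)\big) + \sum_{i=1}^{j-1}\big(\mathcal{IC}_i(j) - \mathcal{IC}_i(j-1)\big) + \mathcal{IC}_j(j) \leq d_j$. -/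

import Mathlib

theorem stmt12 (n : ℕ) (hn : 1 ≤ n)
    (OC : ℕ → ℝ) (IC : ℕ → ℕ → ℝ) (d : ℕ → ℝ)
    (hOC1 : OC 1 = d 1)
    (f : ℕ → ℕ → ℝ)
    (hBB : ∀ j, 1 ≤ j → j ≤ n → ∑ i ∈ Finset.Icc 1 j, f i j = OC j)
    (hsolo : f 1 1 = d 1)
    (hmono : ∀ j, 2 ≤ j → j ≤ n → ∀ i, 1 ≤ i → i ≤ j - 1 →
      f i j + IC i j ≤ f i (j-1) + IC i (j-1))
    (hjoin : ∀ j, 2 ≤ j → j ≤ n → f j j + IC j j ≤ d j) :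
    ∀ j, 2 ≤ j → j ≤ n →
      (OC j - OC (j-1)) + (∑ i ∈ Finset.Icc 1 (j-1), (IC i j - IC i (j-1))) + IC j j
        ≤ d j := by
  intro j hj2 hjn
  have hsum : ∑ i ∈ Finset.Icc 1 (j-1), (f i j + IC i j)
      ≤ ∑ i ∈ Finset.Icc 1 (j-1), (f i (j-1) + IC i (j-1)) := by
    apply Finset.sum_le_sum
    intro i hi
    rw [Finset.mem_Icc] at hi
    exact hmono j hj2 hjn i hi.1 hi.2
  have hBBj : ∑ i ∈ Finset.Icc 1 j, f i j = OC j := hBB j (by omega) hjn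
  have hBBj1 : ∑ i ∈ Finset.Icc 1 (j-1), f i (j-1) = OC (j-1) :=
    hBB (j-1) (by omega) (by omega)
  have hsplit : ∑ i ∈ Finset.Icc 1 j, f i j
      = ∑ i ∈ Finset.Icc 1 (j-1), f i j + f j j := by
    have : Finset.Icc 1 j = insert j (Finset.Icc 1 (j-1)) := by
      ext x; simp [Finset.mem_Icc, Finset.mem_insert]; omega
    rw [this, Finset.sum_insert (by simp [Finset.mem_Icc]; omega)]
    ring
  have hj : f j j + IC j j ≤ d j := hjoin j hj2 hjn
  simp only [Finset.sum_add_distrib, Finset.sum_sub_distrib] at hsum ⊢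
  have h1 : ∑ i ∈ Finset.Icc 1 (j-1), f i j = OC j - f j j := by
    rw [hsplit] at hBBj; linarith
  linarith
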